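/- Let $G$ be a directed multigraph and let $c: \mathcal M_G \to \mathbb R$ be an additive ($\mathbb Z$-linear) map on the group $\mathcal M_G$ of formal cycles such that $c(\mathcal C) > -|\mathcal C|$ for every simple directed cycle $\mathcal C$, where $|\mathcal C|$ is the number of edges of $\mathcal C$. Then $c$ extends to a $\mathbb Z$-linear map $c: \mathbb Z^{E(G)} \to \mathbb R$ with $c(e) > -1$ for every edge $e \in E(G)$. -/

import Mathlib

open Classical in
/-- `c : Fin (k+1) → ε` is a simple directed cycle in the multigraph with source and target
maps `s, t`. -/
def IsCycleFun {V ε : Type*} (s t : ε → V) (k : ℕ) (c : Fin (k + 1) → ε) : Prop :=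
  Function.Injective c ∧ (∀ i : Fin (k + 1), t (c i) = s (c (i + 1))) ∧
    Function.Injective fun i => s (c i)

open Classical in
/-- The characteristic vector (in `ℤ^{E(G)}`) of a simple directed cycle. -/
noncomputable def cycChi {ε : Type*} {k : ℕ} (c : Fin (k + 1) → ε) : ε → ℤ :=
  fun e => if ∃ i, c i = e then 1 else 0

section Aux
variable {V ε : Type} [Fintype V] [Fintype ε] (s t : ε → V)

open Classical

noncomputable def cycR {ε : Type} {k : ℕ} (c : Fin (k + 1) → ε) : ε → ℝ :=
  fun e => if ∃ i, c i = e then 1 else 0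

def IsCirc (w : ε → ℝ) : Prop :=
  ∀ x : V, (∑ e, if s e = x then w e else 0) = ∑ e, if t e = x then w e else 0

lemma cyc_mul_sum {k : ℕ} {c : Fin (k + 1) → ε} (hc : Function.Injective c) (g : ε → ℝ) :
    ∑ e, cycR c e * g e = ∑ i, g (c i) := by
  have h1 : ∀ e, cycR c e * g e = if e ∈ Finset.image c Finset.univ then g e else 0 := by
    intro e
    unfold cycR
    by_cases h : ∃ i, c i = e
    · rw [if_pos h, if_pos, one_mul]
      obtain ⟨i, hi⟩ := h
      exact Finset.mem_image.mpr ⟨i, Finset.mem_univ i, hi⟩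
    · rw [if_neg h, if_neg, zero_mul]
      intro hmem
      obtain ⟨i, _, hi⟩ := Finset.mem_image.mp hmem
      exact h ⟨i, hi⟩
  rw [Finset.sum_congr rfl fun e _ => h1 e]
  rw [Finset.sum_ite_mem, Finset.univ_inter]
  exact Finset.sum_image fun a _ b _ h => hc h

lemma cyc_sum {k : ℕ} {c : Fin (k + 1) → ε} (hc : Function.Injective c) :
    ∑ e, cycR c e = (k : ℝ) + 1 := by
  have := cyc_mul_sum hc (fun _ => (1 : ℝ))
  simp only [mul_one] at this
  rw [this]
  simp

lemma cycR_circ {k : ℕ} {c : Fin (k + 1) → ε} (hc : IsCycleFun s t k c) :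
    IsCirc s t (cycR c) := by
  intro x
  obtain ⟨hinj, hedge, _⟩ := hc
  have hs : (∑ e, if s e = x then cycR c e else 0) = ∑ i, if s (c i) = x then (1:ℝ) else 0 := by
    have : ∀ e, (if s e = x then cycR c e else 0) = cycR c e * (if s e = x then 1 else 0) := by
      intro e; split_ifs <;> ring
    rw [Finset.sum_congr rfl fun e _ => this e, cyc_mul_sum hinj]
  have ht : (∑ e, if t e = x then cycR c e else 0) = ∑ i, if t (c i) = x then (1:ℝ) else 0 := by
    have : ∀ e, (if t e = x then cycR c e else 0) = cycR c e * (if t e = x then 1 else 0) := by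
      intro e; split_ifs <;> ring
    rw [Finset.sum_congr rfl fun e _ => this e, cyc_mul_sum hinj]
  rw [hs, ht]
  have : ∀ i : Fin (k+1), (if t (c i) = x then (1:ℝ) else 0) = if s (c (i+1)) = x then (1:ℝ) else 0 := by
    intro i; rw [hedge i]
  rw [Finset.sum_congr rfl fun i _ => this i]
  exact (Fintype.sum_equiv (Equiv.addRight 1) _ _ fun i => rfl).symm

lemma exists_cycle (w : ε → ℝ) (hw0 : ∀ e, 0 ≤ w e) (hcirc : IsCirc s t w) (hne : w ≠ 0) :
    ∃ (k : ℕ) (c : Fin (k + 1) → ε), IsCycleFun s t k c ∧ ∀ i, 0 < w (c i) := by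
  classical
  -- a starting edge
  obtain ⟨e₀, he₀⟩ : ∃ e, 0 < w e := by
    by_contra h
    push_neg at h
    exact hne (funext fun e => le_antisymm (h e) (hw0 e))
  -- successor step
  have step : ∀ e, 0 < w e → ∃ e', 0 < w e' ∧ s e' = t e := by
    intro e he
    have hpos : 0 < ∑ e', if t e' = t e then w e' else 0 := by
      apply Finset.sum_pos' (fun i _ => by split_ifs; exacts [hw0 i, le_refl 0])
      exact ⟨e, Finset.mem_univ e, by simpa using he⟩
    rw [← hcirc (t e)] at hpos
    by_contra h
    push_neg at h
    have : (∑ e', if s e' = t e then w e' else 0) = 0 := by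
      apply Finset.sum_eq_zero
      intro e' _
      split_ifs with hse
      · by_contra hw'
        have hpos' : 0 < w e' := lt_of_le_of_ne (hw0 e') (Ne.symm hw')
        exact (h e' hpos') hse
      · rfl
    rw [this] at hpos; exact lt_irrefl 0 hpos
  -- iterate
  let next : ε → ε := fun e => if h : 0 < w e then (step e h).choose else e
  have hnext : ∀ e (h : 0 < w e), 0 < w (next e) ∧ s (next e) = t e := by
    intro e h
    simp only [next, dif_pos h]
    exact (step e h).choose_spec
  let seq : ℕ → ε := fun n => next^[n] e₀
  have hseq : ∀ n, 0 < w (seq n) := by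
    intro n
    induction n with
    | zero => exact he₀
    | succ n ih =>
      have : seq (n+1) = next (seq n) := Function.iterate_succ_apply' next n e₀
      rw [this]
      exact (hnext _ ih).1
  have hedge : ∀ n, s (seq (n+1)) = t (seq n) := by
    intro n
    have : seq (n+1) = next (seq n) := Function.iterate_succ_apply' next n e₀
    rw [this]
    exact (hnext _ (hseq n)).2
  set v : ℕ → V := fun n => s (seq n) with hv
  -- find a repeat
  obtain ⟨m, n, hmn, hvmn⟩ := Finite.exists_ne_map_eq_of_infinite v
  have hQ : ∃ j, ∃ i, i < j ∧ v i = v j := by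
    rcases lt_or_gt_of_ne hmn with h | h
    · exact ⟨n, m, h, hvmn⟩
    · exact ⟨m, n, h, hvmn.symm⟩
  let j := Nat.find hQ
  obtain ⟨i, hij, hvij⟩ : ∃ i, i < j ∧ v i = v j := Nat.find_spec hQ
  have hmin : ∀ j' < j, ¬ ∃ i, i < j' ∧ v i = v j' := fun j' hj' => Nat.find_min hQ hj'
  -- distinctness on [i, j)
  have hdist : ∀ a b, i ≤ a → a < b → b < j → v a ≠ v b := by
    intro a b ha hab hbj hvab
    exact hmin b hbj ⟨a, hab, hvab⟩
  set k := j - i - 1 with hk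
  have hk1 : i + (k + 1) = j := by omega
  refine ⟨k, fun m => seq (i + m.val), ?_, fun m => hseq _⟩
  have hsinj : Function.Injective fun m : Fin (k+1) => s (seq (i + m.val)) := by
    intro a b hab
    simp only at hab
    by_contra hne'
    have hne'' : a.val ≠ b.val := fun h => hne' (Fin.ext h)
    have key : ∀ a b : Fin (k+1), a.val < b.val → v (i + a.val) = v (i + b.val) → False := by
      intro a b h hv'
      exact hdist (i + a.val) (i + b.val) (Nat.le_add_right i _) (by omega)
        (by have := b.isLt; omega) hv'
    rcases Nat.lt_or_ge a.val b.val with h | h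
    · exact key a b h hab
    · exact key b a (by omega) hab.symm
  refine ⟨fun a b hab => hsinj (congrArg s hab), ?_, hsinj⟩
  intro m
  show t (seq (i + m.val)) = s (seq (i + ((m + 1 : Fin (k+1)) : ℕ)))
  rw [← hedge (i + m.val)]
  rcases eq_or_ne m (Fin.last k) with hm | hm
  · have h1 : ((m + 1 : Fin (k+1)) : ℕ) = 0 := by rw [Fin.val_add_one, if_pos hm]
    have h2 : i + m.val + 1 = j := by subst hm; simp only [Fin.val_last]; omega
    rw [h1, h2]
    show v j = v (i + 0)
    rw [Nat.add_zero]
    exact hvij.symm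
  · have h1 : ((m + 1 : Fin (k+1)) : ℕ) = m.val + 1 := by rw [Fin.val_add_one, if_neg hm]
    rw [h1, Nat.add_assoc]

lemma circ_sum_pos (u : ε → ℝ)
    (hu : ∀ (k : ℕ) (c : Fin (k + 1) → ε), IsCycleFun s t k c → 0 < ∑ e, cycR c e * u e) :
    ∀ (n : ℕ) (w : ε → ℝ), (Finset.univ.filter fun e => w e ≠ 0).card ≤ n →
      (∀ e, 0 ≤ w e) → IsCirc s t w →
      0 ≤ ∑ e, w e * u e ∧ (w ≠ 0 → 0 < ∑ e, w e * u e) := by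
  intro n
  induction n with
  | zero =>
    intro w hcard hw0 _
    have hw : w = 0 := by
      funext e
      simp only [Pi.zero_apply]
      by_contra he
      have : e ∈ Finset.univ.filter fun e => w e ≠ 0 := by
        simp [he]
      simp [Finset.card_eq_zero.mp (Nat.le_zero.mp hcard)] at this
    subst hw
    simp
  | succ n ih =>
    intro w hcard hw0 hcirc
    rcases eq_or_ne w 0 with hw | hw
    · subst hw; simp
    obtain ⟨k, c, hcyc, hcpos⟩ := exists_cycle s t w hw0 hcirc hw
    -- minimum over the cycle
    have hne : (Finset.univ : Finset (Fin (k+1))).Nonempty := Finset.univ_nonempty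
    set lam := Finset.univ.inf' hne (fun i => w (c i)) with hlam
    have hlam_pos : 0 < lam := by
      rw [hlam, Finset.lt_inf'_iff]
      exact fun i _ => hcpos i
    have hlam_le : ∀ i, lam ≤ w (c i) := fun i => Finset.inf'_le _ (Finset.mem_univ i)
    obtain ⟨i₀, _, hi₀⟩ := Finset.exists_mem_eq_inf' hne (fun i => w (c i))
    set w' : ε → ℝ := fun e => w e - lam * cycR c e with hw'
    have hw'0 : ∀ e, 0 ≤ w' e := by
      intro e
      rw [hw']
      simp only [cycR]
      split_ifs with h
      · obtain ⟨i, hi⟩ := h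
        rw [mul_one]
        subst hi
        linarith [hlam_le i]
      · rw [mul_zero]
        linarith [hw0 e]
    have hzero : ∀ e, w e = 0 → w' e = 0 := by
      intro e he
      rw [hw']
      simp only [cycR]
      split_ifs with h
      · obtain ⟨i, hi⟩ := h
        exact absurd he (ne_of_gt (hi ▸ hcpos i))
      · rw [mul_zero, he, sub_zero]
    have hw'circ : IsCirc s t w' := by
      intro x
      have hcc := cycR_circ s t hcyc x
      have hwc := hcirc x
      have expand : ∀ (f : ε → V) (z : ε → ℝ),
          (∑ e, if f e = x then (z e - lam * cycR c e) else 0)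
          = (∑ e, if f e = x then z e else 0) - lam * ∑ e, if f e = x then cycR c e else 0 := by
        intro f z
        rw [Finset.mul_sum, ← Finset.sum_sub_distrib]
        apply Finset.sum_congr rfl
        intro e _
        split_ifs <;> ring
      rw [hw']
      calc (∑ e, if s e = x then (w e - lam * cycR c e) else 0)
          = (∑ e, if s e = x then w e else 0) - lam * ∑ e, if s e = x then cycR c e else 0 :=
            expand s w
        _ = (∑ e, if t e = x then w e else 0) - lam * ∑ e, if t e = x then cycR c e else 0 := by
            rw [hwc, hcc]
        _ = ∑ e, if t e = x then (w e - lam * cycR c e) else 0 := (expand t w).symm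
    -- support decreases
    have hsub : (Finset.univ.filter fun e => w' e ≠ 0) ⊂ (Finset.univ.filter fun e => w e ≠ 0) := by
      constructor
      · intro e he
        simp only [Finset.mem_filter, Finset.mem_univ, true_and] at he ⊢
        intro h0
        exact he (hzero e h0)
      · intro hsup
        have h1 : c i₀ ∈ Finset.univ.filter fun e => w e ≠ 0 := by
          simp only [Finset.mem_filter, Finset.mem_univ, true_and]
          exact ne_of_gt (hcpos i₀)
        have h2 := hsup h1
        simp only [Finset.mem_filter, Finset.mem_univ, true_and] at h2
        apply h2
        show w (c i₀) - lam * cycR c (c i₀) = 0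
        have : cycR c (c i₀) = 1 := by simp only [cycR]; rw [if_pos ⟨i₀, rfl⟩]
        rw [this, mul_one, hlam, hi₀]
        ring
    have hcard' : (Finset.univ.filter fun e => w' e ≠ 0).card ≤ n := by
      have := Finset.card_lt_card hsub
      omega
    obtain ⟨hge, _⟩ := ih w' hcard' hw'0 hw'circ
    have hsplit : ∑ e, w e * u e = (∑ e, w' e * u e) + lam * ∑ e, cycR c e * u e := by
      rw [Finset.mul_sum, ← Finset.sum_add_distrib]
      apply Finset.sum_congr rfl
      intro e _
      rw [hw']
      ring
    have hcu := hu k c hcyc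
    constructor
    · rw [hsplit]; nlinarith
    · intro _; rw [hsplit]; nlinarith

noncomputable def circSub : Submodule ℝ (EuclideanSpace ℝ ε) where
  carrier := {w | IsCirc s t w}
  add_mem' := by
    intro a b ha hb
    intro x
    have h1 : ∀ (f : ε → V) (e : ε), (if f e = x then (a + b) e else 0)
        = (if f e = x then a e else 0) + (if f e = x then b e else 0) := by
      intro f e
      have : (a + b) e = a e + b e := rfl
      rw [this]; split_ifs <;> simp
    rw [Finset.sum_congr rfl fun e _ => h1 s e, Finset.sum_congr rfl fun e _ => h1 t e,
      Finset.sum_add_distrib, Finset.sum_add_distrib, ha x, hb x]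
  zero_mem' := by
    intro x
    simp
  smul_mem' := by
    intro r a ha
    intro x
    have h1 : ∀ (f : ε → V) (e : ε), (if f e = x then (r • a) e else 0)
        = r * (if f e = x then a e else 0) := by
      intro f e
      have : (r • a) e = r * a e := rfl
      rw [this]; split_ifs <;> simp
    rw [Finset.sum_congr rfl fun e _ => h1 s e, Finset.sum_congr rfl fun e _ => h1 t e,
      ← Finset.mul_sum, ← Finset.mul_sum, ha x]

noncomputable def evalL (e : ε) : EuclideanSpace ℝ ε →ₗ[ℝ] ℝ where
  toFun z := z e
  map_add' _ _ := rfl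
  map_smul' _ _ := rfl

lemma key (u : ε → ℝ)
    (hu : ∀ (k : ℕ) (c : Fin (k + 1) → ε), IsCycleFun s t k c → 0 < ∑ e, cycR c e * u e) :
    ∃ z : ε → ℝ, (∀ e, 0 < z e) ∧
      ∀ (k : ℕ) (c : Fin (k + 1) → ε), IsCycleFun s t k c →
        ∑ e, cycR c e * z e = ∑ e, cycR c e * u e := by
  by_contra hcon
  set uE : EuclideanSpace ℝ ε := WithLp.toLp 2 u with huE
  set O : Set (EuclideanSpace ℝ ε) := {z | ∀ e, 0 < z e} with hO
  set K : Set (EuclideanSpace ℝ ε) := {z | ∀ (k : ℕ) (c : Fin (k + 1) → ε),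
    IsCycleFun s t k c → ∑ e, cycR c e * z e = ∑ e, cycR c e * u e} with hK
  have hOopen : IsOpen O := by
    have h : O = ⋂ e, ((fun z : EuclideanSpace ℝ ε => z e) ⁻¹' Set.Ioi 0) := by
      ext z; simp [hO, Set.mem_iInter]
    rw [h]
    exact isOpen_iInter_of_finite fun e =>
      (isOpen_Ioi).preimage ((continuous_apply e).comp (PiLp.continuous_ofLp 2 _))
  have hOconv : Convex ℝ O := by
    have h : O = ⋂ e, ((evalL (ε := ε) e) ⁻¹' Set.Ioi 0) := by
      ext z
      simp only [hO, Set.mem_setOf_eq, Set.mem_iInter, Set.mem_preimage, Set.mem_Ioi]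
      exact Iff.rfl
    rw [h]
    exact convex_iInter fun e => (convex_Ioi 0).linear_preimage (evalL e)
  have hKconv : Convex ℝ K := by
    intro z1 h1 z2 h2 a b ha hb hab
    intro k c hc
    have hpt : ∀ e, cycR c e * (a • z1 + b • z2) e
        = a * (cycR c e * z1 e) + b * (cycR c e * z2 e) := by
      intro e
      have h3 : (a • z1 + b • z2) e = a * z1 e + b * z2 e := rfl
      rw [h3]; ring
    rw [Finset.sum_congr rfl fun e _ => hpt e, Finset.sum_add_distrib,
      ← Finset.mul_sum, ← Finset.mul_sum, h1 k c hc, h2 k c hc, ← add_mul, hab, one_mul]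
  have hKu : uE ∈ K := fun _ _ _ => rfl
  have hdisj : Disjoint O K := by
    rw [Set.disjoint_left]
    intro z hzO hzK
    exact hcon ⟨z, hzO, fun k c hc => hzK k c hc⟩
  obtain ⟨φ, cst, hφO, hφK⟩ := geometric_hahn_banach_open hOconv hOopen hKconv hdisj
  obtain ⟨y, hy⟩ : ∃ y : EuclideanSpace ℝ ε, ∀ z : EuclideanSpace ℝ ε,
      φ z = ∑ e, y e * z e := by
    refine ⟨(InnerProductSpace.toDual ℝ _).symm φ, fun z => ?_⟩
    have h1 : (inner ℝ ((InnerProductSpace.toDual ℝ (EuclideanSpace ℝ ε)).symm φ) z : ℝ)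
        = φ z := InnerProductSpace.toDual_symm_apply
    rw [← h1]
    simp only [PiLp.inner_apply, RCLike.inner_apply, conj_trivial, mul_comm]
  -- φ vanishes on directions of K
  have hdir : ∀ w : EuclideanSpace ℝ ε, (∀ (k : ℕ) (c : Fin (k + 1) → ε),
      IsCycleFun s t k c → ∑ e, cycR c e * w e = 0) → φ w = 0 := by
    intro w hw
    have hmem : ∀ T : ℝ, (uE + T • w) ∈ K := by
      intro T k c hc
      have hpt : ∀ e, cycR c e * (uE + T • w) e
          = cycR c e * u e + T * (cycR c e * w e) := by
        intro e
        have h3 : (uE + T • w) e = u e + T * w e := rfl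
        rw [h3]; ring
      rw [Finset.sum_congr rfl fun e _ => hpt e, Finset.sum_add_distrib,
        ← Finset.mul_sum, hw k c hc, mul_zero, add_zero]
    by_contra hφw
    have hT := hφK _ (hmem ((cst - 1 - φ uE) / (φ w)))
    rw [map_add, map_smul, smul_eq_mul, div_mul_cancel₀ _ hφw] at hT
    linarith
  set onesE : EuclideanSpace ℝ ε := WithLp.toLp 2 (fun _ => (1:ℝ)) with honesdef
  have honesO : onesE ∈ O := fun e => one_pos
  have hφones : φ onesE = ∑ e, y e := by
    rw [hy]
    exact Finset.sum_congr rfl fun e _ => mul_one (y e)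
  have hsingle : ∀ e : ε, φ (EuclideanSpace.single e 1) = y e := by
    intro e
    rw [hy]
    have hpt : ∀ e', y e' * (EuclideanSpace.single e 1) e' = if e' = e then y e' else 0 := by
      intro e'
      rw [EuclideanSpace.single_apply]
      split_ifs <;> ring
    rw [Finset.sum_congr rfl fun e' _ => hpt e', Finset.sum_ite_eq' Finset.univ e]
    simp
  have hyle : ∀ e, y e ≤ 0 := by
    intro e
    by_contra hpos
    push_neg at hpos
    set T := max 1 ((cst - φ onesE + 1) / y e) with hT
    have hT1 : (1 : ℝ) ≤ T := le_max_left _ _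
    have zO : (onesE + T • EuclideanSpace.single e 1) ∈ O := by
      intro e'
      have h1 : (onesE + T • EuclideanSpace.single e (1:ℝ)) e'
          = 1 + T * (if e' = e then 1 else 0) := by
        show onesE e' + T * (EuclideanSpace.single e (1:ℝ)) e' = _
        rw [EuclideanSpace.single_apply]
      rw [h1]
      split_ifs <;> linarith
    have hlt := hφO _ zO
    have hval : φ (onesE + T • EuclideanSpace.single e 1)
        = φ onesE + T * y e := by
      rw [map_add, map_smul, smul_eq_mul, hsingle e]
    have hTy : cst - φ onesE + 1 ≤ T * y e := by
      calc cst - φ onesE + 1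
          = ((cst - φ onesE + 1) / y e) * y e := by
            field_simp
        _ ≤ T * y e := mul_le_mul_of_nonneg_right (le_max_right _ _) (le_of_lt hpos)
    linarith
  have hS1 : ∑ e, y e ≤ 0 := Finset.sum_nonpos fun e _ => hyle e
  have hcst0 : 0 ≤ cst := by
    by_contra h
    push_neg at h
    have hδ : ∀ δ : ℝ, 0 < δ → δ * (∑ e, y e) < cst := by
      intro δ hδpos
      have hO' : (δ • onesE) ∈ O := by
        intro e
        show 0 < δ * 1
        simpa using hδpos
      have h2 := hφO _ hO'
      rw [map_smul, smul_eq_mul, hφones] at h2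
      exact h2
    rcases lt_or_eq_of_le hS1 with hS | hS
    · have hSne : (∑ e, y e) ≠ 0 := ne_of_lt hS
      have hδpos : 0 < cst / (2 * (∑ e, y e)) := div_pos_of_neg_of_neg h (by linarith)
      have hval : (cst / (2 * (∑ e, y e))) * (∑ e, y e) = cst / 2 := by
        rw [mul_comm 2 (∑ e, y e), div_mul_eq_mul_div, ← div_div, mul_div_assoc,
          div_self hSne, mul_one]
      have := hδ _ hδpos
      rw [hval] at this
      linarith
    · have := hδ 1 one_pos
      rw [hS] at this
      simp at this
      linarith
  have hcu : cst ≤ φ uE := hφK uE hKu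
  rcases eq_or_ne y 0 with hy0 | hy0
  · have h1 : φ onesE < cst := hφO _ honesO
    have h2 : φ onesE = 0 := by
      rw [hφones, hy0]
      simp
    have h3 : φ uE = 0 := by
      rw [hy uE, hy0]
      simp
    linarith
  -- y lies in the span of the cycle vectors
  set W : Submodule ℝ (EuclideanSpace ℝ ε) := Submodule.span ℝ
    {x : EuclideanSpace ℝ ε | ∃ (k : ℕ) (c : Fin (k + 1) → ε),
      IsCycleFun s t k c ∧ x = WithLp.toLp 2 (cycR c)} with hW
  have hyW : y ∈ W := by
    rw [← Submodule.orthogonal_orthogonal W, Submodule.mem_orthogonal]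
    intro w hw
    have hw0 : ∀ (k : ℕ) (c : Fin (k + 1) → ε), IsCycleFun s t k c →
        ∑ e, cycR c e * w e = 0 := by
      intro k c hc
      have hmem : (WithLp.toLp 2 (cycR c) : EuclideanSpace ℝ ε) ∈ W := Submodule.subset_span ⟨k, c, hc, rfl⟩
      have h2 := (Submodule.mem_orthogonal W w).mp hw _ hmem
      simpa [PiLp.inner_apply, RCLike.inner_apply, conj_trivial, mul_comm] using h2
    have hφw := hdir w hw0
    have h3 : (inner ℝ y w : ℝ) = ∑ e, y e * w e := by
      simp [PiLp.inner_apply, RCLike.inner_apply, conj_trivial, mul_comm]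
    calc (inner ℝ w y : ℝ) = (inner ℝ y w : ℝ) := (real_inner_comm w y).symm
      _ = ∑ e, y e * w e := h3
      _ = φ w := (hy w).symm
      _ = 0 := hφw
  have hWcirc : W ≤ circSub s t := by
    rw [hW, Submodule.span_le]
    rintro x ⟨k, c, hc, rfl⟩
    exact cycR_circ s t hc
  have hycirc : IsCirc s t (fun e => y e) := hWcirc hyW
  -- apply the decomposition lemma to -y
  set wv : ε → ℝ := fun e => - y e with hwv
  have hwv0 : ∀ e, 0 ≤ wv e := fun e => neg_nonneg.mpr (hyle e)
  have hwvcirc : IsCirc s t wv := by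
    intro x
    have h0 := hycirc x
    have h1 : ∀ (f : ε → V) (e : ε), (if f e = x then wv e else 0)
        = - (if f e = x then y e else 0) := by
      intro f e
      rw [hwv]
      split_ifs <;> simp
    rw [Finset.sum_congr rfl fun e _ => h1 s e, Finset.sum_congr rfl fun e _ => h1 t e,
      Finset.sum_neg_distrib, Finset.sum_neg_distrib, h0]
  have hwvne : wv ≠ 0 := by
    intro hz
    apply hy0
    ext e
    have h1 : wv e = 0 := by rw [hz]; rfl
    have h2 : - y e = 0 := h1
    simpa using h2
  have hB := (circ_sum_pos s t u hu _ wv (le_refl _) hwv0 hwvcirc).2 hwvne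
  have hval : ∑ e, wv e * u e = - φ uE := by
    calc ∑ e, wv e * u e = ∑ e, -(y e * uE e) := by
          apply Finset.sum_congr rfl
          intro e _
          show - y e * u e = -(y e * u e)
          ring
      _ = - ∑ e, y e * uE e := Finset.sum_neg_distrib _
      _ = - φ uE := by rw [hy uE]
  rw [hval] at hB
  linarith

lemma chi_cast {k : ℕ} (c : Fin (k + 1) → ε) (e : ε) :
    ((cycChi c e : ℤ) : ℝ) = cycR c e := by
  simp [cycChi, cycR, apply_ite (Int.cast : ℤ → ℝ)]

lemma chi_single {k : ℕ} {c : Fin (k + 1) → ε} (hc : Function.Injective c) :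
    (cycChi c : ε → ℤ) = ∑ i : Fin (k + 1), Pi.single (c i) (1 : ℤ) := by
  funext e
  simp only [Finset.sum_apply]
  have hterm : ∀ i : Fin (k + 1), (Pi.single (c i) 1 : ε → ℤ) e = if e = c i then 1 else 0 := by
    intro i
    rw [Pi.single_apply]
  rw [Finset.sum_congr rfl fun i _ => hterm i]
  by_cases h : ∃ i, c i = e
  · obtain ⟨i₀, hi₀⟩ := h
    have h2 : ∀ i : Fin (k + 1), (if e = c i then (1:ℤ) else 0) = if i = i₀ then 1 else 0 := by
      intro i
      by_cases hi : i = i₀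
      · subst hi
        simp [hi₀]
      · rw [if_neg hi, if_neg]
        intro hee
        exact hi ((hc (hi₀.trans hee)).symm)
    rw [Finset.sum_congr rfl fun i _ => h2 i, Finset.sum_ite_eq' Finset.univ i₀]
    simp only [Finset.mem_univ, if_true]
    show cycChi c e = 1
    rw [cycChi, if_pos ⟨i₀, hi₀⟩]
  · have h2 : ∀ i : Fin (k + 1), (if e = c i then (1:ℤ) else 0) = 0 := by
      intro i
      rw [if_neg]
      intro hee
      exact h ⟨i, hee.symm⟩
    rw [Finset.sum_congr rfl fun i _ => h2 i, Finset.sum_const, smul_zero]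
    show cycChi c e = 0
    rw [cycChi, if_neg h]

end Aux


open Classical in
/-- An additive map on the group `M_G` of formal cycles with `c(𝒞) > -|𝒞|` on every simple
directed cycle `𝒞` extends to an additive map on `ℤ^{E(G)}` with `c(e) > -1` on every edge. -/
theorem stmt13 (V ε : Type) [Fintype V] [Fintype ε] (s t : ε → V)
    (M : AddSubgroup (ε → ℤ))
    (hM : M = AddSubgroup.closure
      {x : ε → ℤ | ∃ (k : ℕ) (c : Fin (k + 1) → ε), IsCycleFun s t k c ∧ x = cycChi c})
    (f : M →+ ℝ)
    (hf : ∀ (x : ε → ℤ) (hx : x ∈ M) (k : ℕ) (c : Fin (k + 1) → ε),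
      IsCycleFun s t k c → x = cycChi c → -((k : ℝ) + 1) < f ⟨x, hx⟩) :
    ∃ g : (ε → ℤ) →+ ℝ,
      (∀ (x : ε → ℤ) (hx : x ∈ M), g x = f ⟨x, hx⟩) ∧
      ∀ e : ε, -1 < g (Pi.single e 1) := by

  have hmemM : ∀ (k : ℕ) (c : Fin (k + 1) → ε), IsCycleFun s t k c → cycChi c ∈ M := by
    intro k c hc
    rw [hM]
    exact AddSubgroup.subset_closure ⟨k, c, hc, rfl⟩
  have inj : Module.Injective ℤ ℝ := (Module.Baer.of_divisible ℝ).injective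
  obtain ⟨h, hh⟩ := inj.out ((AddSubgroup.toIntSubmodule M).subtype)
    (Submodule.injective_subtype _) f.toIntLinearMap
  set u : ε → ℝ := fun e => h (Pi.single e 1) + 1 with hu
  have hhval : ∀ (k : ℕ) (c : Fin (k + 1) → ε) (hc : IsCycleFun s t k c),
      h (cycChi c) = f ⟨cycChi c, hmemM k c hc⟩ := by
    intro k c hc
    exact hh ⟨cycChi c, hmemM k c hc⟩
  have hsum : ∀ (k : ℕ) (c : Fin (k + 1) → ε) (hc : IsCycleFun s t k c),
      ∑ e, cycR c e * u e = f ⟨cycChi c, hmemM k c hc⟩ + ((k : ℝ) + 1) := by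
    intro k c hc
    have h1 : ∀ e, cycR c e * u e = cycR c e * h (Pi.single e 1) + cycR c e := by
      intro e
      rw [hu]
      ring
    rw [Finset.sum_congr rfl fun e _ => h1 e, Finset.sum_add_distrib, cyc_sum hc.1,
      cyc_mul_sum hc.1 fun e => h (Pi.single e 1)]
    congr 1
    rw [← hhval k c hc, chi_single hc.1, map_sum]
  have hpos : ∀ (k : ℕ) (c : Fin (k + 1) → ε), IsCycleFun s t k c →
      0 < ∑ e, cycR c e * u e := by
    intro k c hc
    rw [hsum k c hc]
    have := hf (cycChi c) (hmemM k c hc) k c hc rfl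
    linarith
  obtain ⟨z, hzpos, hz⟩ := key s t u hpos
  set g : (ε → ℤ) →+ ℝ := AddMonoidHom.mk' (fun x : ε → ℤ => ∑ e, (x e : ℝ) * (z e - 1))
    (by
      intro a b
      show (∑ e, (((a + b) e : ℤ) : ℝ) * (z e - 1))
        = (∑ e, (a e : ℝ) * (z e - 1)) + ∑ e, (b e : ℝ) * (z e - 1)
      have h1 : ∀ e, (((a + b) e : ℤ) : ℝ) * (z e - 1)
          = (a e : ℝ) * (z e - 1) + (b e : ℝ) * (z e - 1) := by
        intro e
        have h2 : (a + b) e = a e + b e := rfl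
        rw [h2]
        push_cast
        ring
      rw [Finset.sum_congr rfl fun e _ => h1 e, Finset.sum_add_distrib]) with hg
  have hgapp : ∀ x : ε → ℤ, g x = ∑ e, (x e : ℝ) * (z e - 1) := fun x => rfl
  have hgval : ∀ (k : ℕ) (c : Fin (k + 1) → ε) (hc : IsCycleFun s t k c),
      g (cycChi c) = f ⟨cycChi c, hmemM k c hc⟩ := by
    intro k c hc
    rw [hgapp]
    have h1 : ∀ e, ((cycChi c e : ℤ) : ℝ) * (z e - 1) = cycR c e * z e - cycR c e := by
      intro e
      rw [chi_cast]
      ring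
    rw [Finset.sum_congr rfl fun e _ => h1 e, Finset.sum_sub_distrib,
      hz k c hc, hsum k c hc, cyc_sum hc.1]
    ring
  refine ⟨g, ?_, ?_⟩
  · intro x hx
    have hx' : x ∈ AddSubgroup.closure
        {x : ε → ℤ | ∃ (k : ℕ) (c : Fin (k + 1) → ε), IsCycleFun s t k c ∧ x = cycChi c} := by
      rw [← hM]; exact hx
    refine AddSubgroup.closure_induction
      (p := fun x _ => ∀ hxm : x ∈ M, g x = f ⟨x, hxm⟩) ?_ ?_ ?_ ?_ hx' hx
    · rintro x ⟨k, c, hc, rfl⟩ hxm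
      exact hgval k c hc
    · intro hxm
      have h0 : (⟨0, hxm⟩ : M) = 0 := rfl
      rw [h0, map_zero, map_zero]
    · intro a b hca hcb iha ihb hxm
      have haM : a ∈ M := by rw [hM]; exact hca
      have hbM : b ∈ M := by rw [hM]; exact hcb
      have hab : (⟨a + b, hxm⟩ : M) = ⟨a, haM⟩ + ⟨b, hbM⟩ := rfl
      rw [map_add, hab, map_add, iha haM, ihb hbM]
    · intro a hca iha hxm
      have haM : a ∈ M := by rw [hM]; exact hca
      have hna : (⟨-a, hxm⟩ : M) = -(⟨a, haM⟩ : M) := rfl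
      rw [map_neg, hna, map_neg, iha haM]
  · intro e
    have h1 : g (Pi.single e 1) = z e - 1 := by
      rw [hgapp]
      have h2 : ∀ e', (((Pi.single e 1 : ε → ℤ) e' : ℤ) : ℝ) * (z e' - 1)
          = if e' = e then z e' - 1 else 0 := by
        intro e'
        rw [Pi.single_apply]
        split_ifs <;> push_cast <;> ring
      rw [Finset.sum_congr rfl fun e' _ => h2 e', Finset.sum_ite_eq' Finset.univ e]
      simp
    rw [h1]
    have := hzpos e
    linarith
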